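/- Let b > 0 and C > 0, and let u : [0,C] → ℝ be a nonincreasing function with u(0) = 1 that is integrable on [0,C] and satisfies b·(u(x) − u(C)) ≥ ∫_x^C u(ξ) dξ for every x ∈ [0,C]. Then u(C) ≤ exp(−C/b). -/

import Mathlib

open MeasureTheory

noncomputable section

private lemma poly_integral (b C x : ℝ) (hb : 0 < b) (hx : x ≤ C) (k : ℕ) :
    ∫ t in Set.Icc x C, ((C - t) / b) ^ k / (k.factorial : ℝ)
      = b * (((C - x) / b) ^ (k + 1) / ((k + 1).factorial : ℝ)) := by
  rw [MeasureTheory.integral_Icc_eq_integral_Ioc, ← intervalIntegral.integral_of_le hx]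
  have : ∀ t : ℝ, ((C - t) / b) ^ k / (k.factorial : ℝ)
      = (C - t) ^ k * (1 / (b ^ k * (k.factorial : ℝ))) := by
    intro t; rw [div_pow]; ring
  simp_rw [this]
  rw [intervalIntegral.integral_mul_const,
    intervalIntegral.integral_comp_sub_left (fun t => t ^ k) C, sub_self,
    integral_pow]
  rw [Nat.factorial_succ, div_pow]
  push_cast
  field_simp
  ring

/-- ODE-type tail bound: if `u` is nonincreasing on `[0,C]`, `u(0) = 1`, and
`b·(u(x) - u(C)) ≥ ∫_x^C u(ξ) dξ` for all `x ∈ [0,C]`, then `u(C) ≤ exp(-C/b)`. -/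
theorem ode_tail_bound
    (b C : ℝ) (hb : 0 < b) (hC : 0 < C)
    (u : ℝ → ℝ)
    (hu_mono : AntitoneOn u (Set.Icc 0 C))
    (hu0 : u 0 = 1)
    (hu_int : IntegrableOn u (Set.Icc 0 C))
    (hu_ineq : ∀ x ∈ Set.Icc (0:ℝ) C,
      (∫ t in Set.Icc x C, u t) ≤ b * (u x - u C)) :
    u C ≤ Real.exp (-C / b) := by
  set L := u C with hL
  rcases le_or_gt L 0 with hL0 | hL0
  · exact hL0.trans (Real.exp_pos _).le
  -- main induction
  have key : ∀ n : ℕ, ∀ x ∈ Set.Icc (0:ℝ) C,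
      L * ∑ k ∈ Finset.range (n + 1), ((C - x) / b) ^ k / (k.factorial : ℝ) ≤ u x := by
    intro n
    induction n with
    | zero =>
      intro x hx
      simpa using hu_mono hx (Set.right_mem_Icc.2 hC.le) hx.2
    | succ n ih =>
      intro x hx
      have hxC : x ≤ C := hx.2
      -- integrability of u on Icc x C
      have hsub : Set.Icc x C ⊆ Set.Icc 0 C := Set.Icc_subset_Icc hx.1 le_rfl
      have huint' : IntegrableOn u (Set.Icc x C) := hu_int.mono_set hsub
      -- the polynomial lower bound function
      set g : ℝ → ℝ :=
        fun t => L * ∑ k ∈ Finset.range (n + 1), ((C - t) / b) ^ k / (k.factorial : ℝ) with hg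
      have hgcont : Continuous g := by
        apply continuous_const.mul
        exact continuous_finset_sum _ fun k _ =>
          (((continuous_const.sub continuous_id).div_const b).pow k).div_const _
      have hgint : IntegrableOn g (Set.Icc x C) :=
        hgcont.continuousOn.integrableOn_compact isCompact_Icc
      have hmono : ∫ t in Set.Icc x C, g t ≤ ∫ t in Set.Icc x C, u t := by
        apply setIntegral_mono_on hgint huint' measurableSet_Icc
        intro t ht
        exact ih t ⟨hx.1.trans ht.1, ht.2⟩
      -- compute the integral of g
      have hcalc : ∫ t in Set.Icc x C, g t
          = L * ∑ k ∈ Finset.range (n + 1),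
              b * (((C - x) / b) ^ (k + 1) / ((k + 1).factorial : ℝ)) := by
        rw [hg]
        rw [integral_const_mul]
        congr 1
        rw [integral_finset_sum]
        · exact Finset.sum_congr rfl fun k _ => poly_integral b C x hb hxC k
        · intro k _
          exact (((((continuous_const.sub continuous_id).div_const b).pow k).div_const
            _).continuousOn).integrableOn_compact isCompact_Icc
      -- combine with hu_ineq
      have h1 : L * ∑ k ∈ Finset.range (n + 1),
          b * (((C - x) / b) ^ (k + 1) / ((k + 1).factorial : ℝ)) ≤ b * (u x - L) := by
        rw [← hcalc]
        exact hmono.trans (hu_ineq x hx)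
      -- rearrange: u x ≥ L + (1/b) * LHS
      have hb' : b ≠ 0 := hb.ne'
      have h2 : L + L * ∑ k ∈ Finset.range (n + 1),
          ((C - x) / b) ^ (k + 1) / ((k + 1).factorial : ℝ) ≤ u x := by
        rw [show (∑ k ∈ Finset.range (n + 1),
              b * (((C - x) / b) ^ (k + 1) / ((k + 1).factorial : ℝ)))
            = b * ∑ k ∈ Finset.range (n + 1),
              ((C - x) / b) ^ (k + 1) / ((k + 1).factorial : ℝ)
            from (Finset.mul_sum _ _ _).symm, mul_left_comm] at h1
        have := le_of_mul_le_mul_left h1 hb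
        linarith
      calc L * ∑ k ∈ Finset.range (n + 2), ((C - x) / b) ^ k / (k.factorial : ℝ)
          = L + L * ∑ k ∈ Finset.range (n + 1),
              ((C - x) / b) ^ (k + 1) / ((k + 1).factorial : ℝ) := by
            rw [Finset.sum_range_succ']
            simp only [pow_zero, Nat.factorial_zero, Nat.cast_one, div_one]
            ring
        _ ≤ u x := h2
  -- evaluate at 0 and take the limit
  have h0 : ∀ n : ℕ, L * ∑ k ∈ Finset.range (n + 1), (C / b) ^ k / (k.factorial : ℝ) ≤ 1 := by
    intro n
    have := key n 0 ⟨le_rfl, hC.le⟩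
    simpa [hu0] using this
  have hsum : HasSum (fun k : ℕ => (C / b) ^ k / (k.factorial : ℝ)) (Real.exp (C / b)) := by
    have h := (NormedSpace.expSeries_div_summable (C / b)).hasSum
    have he : Real.exp (C / b) = ∑' n : ℕ, (C / b) ^ n / (n.factorial : ℝ) := by
      rw [Real.exp_eq_exp_ℝ, NormedSpace.exp_eq_tsum_div]
    rw [he]
    exact h
  have htend : Filter.Tendsto
      (fun n : ℕ => L * ∑ k ∈ Finset.range (n + 1), (C / b) ^ k / (k.factorial : ℝ))
      Filter.atTop (nhds (L * Real.exp (C / b))) := by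
    apply Filter.Tendsto.const_mul
    exact hsum.tendsto_sum_nat.comp (Filter.tendsto_add_atTop_nat 1)
  have hle : L * Real.exp (C / b) ≤ 1 :=
    le_of_tendsto htend (Filter.Eventually.of_forall h0)
  have hpos : 0 < Real.exp (C / b) := Real.exp_pos _
  rw [show (-C / b : ℝ) = -(C / b) by ring, Real.exp_neg]
  have := mul_le_mul_of_nonneg_right hle (inv_nonneg.2 hpos.le)
  rw [one_mul, mul_assoc, mul_inv_cancel₀ hpos.ne', mul_one] at this
  exact this
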